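/- Let p be a prime and n a positive integer. If the value Φ_n(p) of the n-th cyclotomic polynomial at p is a power of 3 (where 1 = 3⁰ counts as a power of 3), then p = 2 and n ∈ {1, 2, 6}. -/

import Mathlib

open Polynomial

private lemma zmod3_sq_eq_one : ∀ w : ZMod 3, w ≠ 0 → w ^ 2 = 1 := by decide

private lemma zmod3_root_eq_one : ∀ w : ZMod 3, w ^ 2 + w + 1 = 0 → w = 1 := by decide

private lemma zmod3_two_ne_one : (2 : ZMod 3) ≠ 1 := by decide

/-- If `p` is a prime, `n ≥ 1`, and the value `Φ_n(p)` of the `n`-th cyclotomic polynomial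
at `p` is a power of 3, then `p = 2` and `n ∈ {1, 2, 6}`. -/
theorem cyclotomic_eval_prime_three_pow
    (p n : ℕ) (hp : p.Prime) (hn : 0 < n)
    (h : ∃ k : ℕ, (Polynomial.cyclotomic n ℤ).eval (p : ℤ) = 3 ^ k) :
    p = 2 ∧ n ∈ ({1, 2, 6} : Set ℕ) := by
  obtain ⟨k, heq⟩ := h
  have hp2 := hp.two_le
  rcases Nat.eq_zero_or_pos k with rfl | hk
  · -- the value is 1
    have h1 : (cyclotomic n ℤ).eval (p : ℤ) = 1 := by simpa using heq
    rcases eq_or_lt_of_le (show 1 ≤ n from hn) with h1n | h1n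
    · -- n = 1 : p - 1 = 1
      have hn1 : n = 1 := h1n.symm
      subst hn1
      rw [cyclotomic_one] at h1
      simp only [eval_sub, eval_X, eval_one] at h1
      have : (p : ℤ) = 2 := by linarith
      have hpn : p = 2 := by exact_mod_cast this
      exact ⟨hpn, by simp⟩
    · exfalso
      have hlt := Polynomial.sub_one_lt_natAbs_cyclotomic_eval (n := n) (q := p)
        h1n (by omega)
      rw [h1] at hlt
      simp at hlt
      omega
  · -- k ≥ 1
    haveI : Fact (Nat.Prime 3) := ⟨by norm_num⟩
    set a := n.factorization 3 with ha_def
    set m := n / 3 ^ a with hm_def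
    have hmn : 3 ^ a * m = n := Nat.ordProj_mul_ordCompl_eq_self n 3
    have hm3 : ¬ 3 ∣ m := Nat.not_dvd_ordCompl (by norm_num) hn.ne'
    have hm0 : 0 < m := Nat.ordCompl_pos 3 hn.ne'
    haveI : NeZero ((m : ZMod 3)) :=
      ⟨by rw [Ne, ZMod.natCast_eq_zero_iff]; exact hm3⟩
    have hroot : IsRoot (cyclotomic n (ZMod 3)) (((p : ℤ) : ZMod 3)) := by
      have hcast : (cyclotomic n (ZMod 3)).eval (((p : ℤ)) : ZMod 3)
          = (((cyclotomic n ℤ).eval (p : ℤ) : ℤ) : ZMod 3) := by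
        rw [← map_cyclotomic_int n (ZMod 3)]
        exact eval_intCast_map (Int.castRingHom (ZMod 3)) _ _
      rw [IsRoot, hcast, heq]
      refine (ZMod.intCast_zmod_eq_zero_iff_dvd _ 3).mpr ?_
      exact_mod_cast dvd_pow_self (3 : ℤ) hk.ne'
    have hprim : IsPrimitiveRoot (((p : ℤ) : ZMod 3)) m := by
      rw [← hmn] at hroot
      exact (isRoot_cyclotomic_prime_pow_mul_iff_of_charP).mp hroot
    have hz1 : ((p : ℤ) : ZMod 3) ^ m = 1 := hprim.pow_eq_one
    have hz0 : ((p : ℤ) : ZMod 3) ≠ 0 := by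
      intro h0
      rw [h0, zero_pow hm0.ne'] at hz1
      exact zero_ne_one hz1
    have hzsq : ((p : ℤ) : ZMod 3) ^ 2 = 1 := zmod3_sq_eq_one _ hz0
    have hm2 : m ∣ 2 := (hprim.pow_eq_one_iff_dvd 2).mp hzsq
    rcases Nat.eq_zero_or_pos a with ha0 | ha
    · -- a = 0 : n = m ∈ {1, 2}
      have hnm : n = m := by rw [← hmn, ha0]; ring
      rcases (Nat.dvd_prime Nat.prime_two).mp hm2 with hm1 | hm1
      · -- n = 1 : p - 1 = 3 ^ k, impossible
        exfalso
        have hn1 : n = 1 := by rw [hnm, hm1]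
        subst hn1
        rw [cyclotomic_one] at heq
        simp only [eval_sub, eval_X, eval_one] at heq
        have hpk : (p : ℤ) = 3 ^ k + 1 := by linarith
        have hpk' : p = 3 ^ k + 1 := by exact_mod_cast hpk
        have hodd : Odd (3 ^ k) := Odd.pow (by decide)
        have heven : Even p := by rw [hpk']; exact hodd.add_one
        have := (Nat.Prime.even_iff hp).mp heven
        have h3k : 3 ≤ 3 ^ k := by
          calc 3 = 3 ^ 1 := by norm_num
          _ ≤ 3 ^ k := Nat.pow_le_pow_right (by norm_num) hk
        omega
      · -- n = 2 : p + 1 = 3 ^ k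
        have hn2 : n = 2 := by rw [hnm, hm1]
        subst hn2
        rw [cyclotomic_two] at heq
        simp only [eval_add, eval_X, eval_one] at heq
        have hpk : (p : ℤ) = 3 ^ k - 1 := by linarith
        have hpk' : (p : ℤ) + 1 = 3 ^ k := by linarith
        have hpk'' : p + 1 = 3 ^ k := by exact_mod_cast hpk'
        have hodd : Odd (3 ^ k) := Odd.pow (by decide)
        have heven : Even p := by
          rcases hodd with ⟨t, ht⟩
          exact ⟨t, by omega⟩
        have hpe := (Nat.Prime.even_iff hp).mp heven
        exact ⟨hpe, by simp⟩
    · -- a ≥ 1 : 3 ∣ n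
      have h3n : 3 ∣ n := by
        rw [← hmn]
        exact Dvd.dvd.mul_right (dvd_pow_self 3 ha.ne') m
      obtain ⟨q, hq3⟩ := h3n
      have hn3 : 3 ≤ n := Nat.le_of_dvd hn ⟨q, hq3⟩
      have hq1 : 1 ≤ q := by
        rcases Nat.eq_zero_or_pos q with rfl | h; · omega
        · exact h
      -- Φ_n(p) divides y² + y + 1 where y = p^q
      have hdvd1 : ((X : ℤ[X]) ^ q - 1) * cyclotomic n ℤ ∣ (X : ℤ[X]) ^ n - 1 := by
        rw [← prod_cyclotomic_eq_X_pow_sub_one hn ℤ,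
          ← prod_cyclotomic_eq_X_pow_sub_one hq1 ℤ]
        have hqn : q ∣ n := ⟨3, by omega⟩
        have hnot : n ∉ q.divisors := by
          intro hc
          have := Nat.divisor_le hc
          omega
        have hsub : insert n q.divisors ⊆ n.divisors := by
          intro d hd
          rcases Finset.mem_insert.mp hd with rfl | hd
          · exact Nat.mem_divisors_self _ hn.ne'
          · exact Nat.divisors_subset_of_dvd hn.ne' hqn hd
        calc (∏ d ∈ q.divisors, cyclotomic d ℤ) * cyclotomic n ℤ
            = ∏ d ∈ insert n q.divisors, cyclotomic d ℤ := by
              rw [Finset.prod_insert hnot, mul_comm]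
          _ ∣ ∏ d ∈ n.divisors, cyclotomic d ℤ :=
              Finset.prod_dvd_prod_of_subset _ _ _ hsub
      have hdvd2 : ((p : ℤ) ^ q - 1) * (cyclotomic n ℤ).eval (p : ℤ)
          ∣ ((p : ℤ) ^ q) ^ 3 - 1 := by
        have hev := eval_dvd (x := (p : ℤ)) hdvd1
        simp only [eval_mul, eval_sub, eval_pow, eval_X, eval_one] at hev
        rwa [show (p : ℤ) ^ n = ((p : ℤ) ^ q) ^ 3 by
          rw [← pow_mul]; congr 1; omega] at hev
      set y : ℤ := (p : ℤ) ^ q with hy_def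
      have hy2 : 2 ≤ y := by
        have hp1 : (1 : ℤ) ≤ (p : ℤ) := by exact_mod_cast hp.one_lt.le
        calc (2 : ℤ) ≤ (p : ℤ) := by exact_mod_cast hp2
          _ = (p : ℤ) ^ 1 := (pow_one _).symm
          _ ≤ (p : ℤ) ^ q := pow_le_pow_right₀ hp1 hq1
      have hdvd3 : (cyclotomic n ℤ).eval (p : ℤ) ∣ y ^ 2 + y + 1 := by
        have h3 : y ^ 3 - 1 = (y - 1) * (y ^ 2 + y + 1) := by ring
        rw [h3] at hdvd2
        exact (mul_dvd_mul_iff_left (show y - 1 ≠ 0 by omega)).mp hdvd2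
      rw [heq] at hdvd3
      have h3y : (3 : ℤ) ∣ y ^ 2 + y + 1 :=
        dvd_trans (dvd_pow_self 3 hk.ne') hdvd3
      have hy1 : (3 : ℤ) ∣ y - 1 := by
        have hcast : ((y : ZMod 3)) ^ 2 + (y : ZMod 3) + 1 = 0 := by
          have := (ZMod.intCast_zmod_eq_zero_iff_dvd _ 3).mpr h3y
          push_cast at this
          exact this
        have hval : (y : ZMod 3) = 1 := zmod3_root_eq_one _ hcast
        have : ((y - 1 : ℤ) : ZMod 3) = 0 := by push_cast [hval]; ring
        exact (ZMod.intCast_zmod_eq_zero_iff_dvd _ 3).mp this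
      obtain ⟨t, ht⟩ := hy1
      have h9 : ¬ (9 : ℤ) ∣ y ^ 2 + y + 1 := by
        rintro ⟨s, hs⟩
        have hy' : y = 3 * t + 1 := by omega
        have hkey : 9 * s = 9 * t ^ 2 + 9 * t + 3 := by
          rw [hy'] at hs; linarith [hs]
        omega
      have hk1 : k = 1 := by
        by_contra hne
        have hk2 : 2 ≤ k := by omega
        exact h9 (dvd_trans (by
          calc (9 : ℤ) = 3 ^ 2 := by norm_num
            _ ∣ 3 ^ k := pow_dvd_pow 3 hk2) hdvd3)
      have heq3 : (cyclotomic n ℤ).eval (p : ℤ) = 3 := by rw [heq, hk1]; norm_num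
      -- p = 2
      have hp2' : p = 2 := by
        by_contra hne
        have hp3 : 3 ≤ p := by
          rcases hp.eq_two_or_odd with h2 | _
          · exact absurd h2 hne
          · omega
        have htot : 2 ≤ n.totient := by
          have h0 := Nat.totient_pos.mpr hn
          have hne1 : n.totient ≠ 1 := by
            intro hc
            rcases Nat.totient_eq_one_iff.mp hc with rfl | rfl <;> omega
          omega
        have hlt := Polynomial.sub_one_pow_totient_lt_natAbs_cyclotomic_eval
          (n := n) (q := p) (by omega) (by omega)
        rw [heq3] at hlt
        norm_num at hlt
        have h4 : 4 ≤ (p - 1) ^ n.totient := by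
          calc 4 = 2 ^ 2 := by norm_num
            _ ≤ (p - 1) ^ 2 := Nat.pow_le_pow_left (by omega) 2
            _ ≤ (p - 1) ^ n.totient := Nat.pow_le_pow_right (by omega) htot
        omega
      -- m = 2
      have hm2' : m = 2 := by
        rcases (Nat.dvd_prime Nat.prime_two).mp hm2 with h1 | h2
        · exfalso
          rw [h1, pow_one] at hz1
          rw [hp2'] at hz1
          have h2' : (((2 : ℕ) : ℤ) : ZMod 3) = 2 := by push_cast; ring
          rw [h2'] at hz1
          exact zmod3_two_ne_one hz1
        · exact h2
      -- a = 1
      have ha1 : a = 1 := by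
        by_contra hne
        have ha2 : 2 ≤ a := by omega
        have hqval : q = 3 ^ (a - 1) * 2 := by
          have hn' : n = 3 * (3 ^ (a - 1) * 2) := by
            have h3a : (3 : ℕ) ^ a = 3 ^ (a - 1) * 3 := by
              rw [← pow_succ]; congr 1; omega
            rw [← hmn, hm2', h3a]; ring
          omega
        have h3q : 3 ∣ q := by
          rw [hqval]
          exact Dvd.dvd.mul_right (dvd_pow_self 3 (by omega)) 2
        have hexp := cyclotomic_expand_eq_cyclotomic Nat.prime_three h3q ℤ
        have heval : (cyclotomic q ℤ).eval (((8 : ℕ) : ℤ)) = 3 := by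
          have h8 : ((8 : ℕ) : ℤ) = (p : ℤ) ^ 3 := by rw [hp2']; norm_num
          rw [h8, ← expand_eval 3 (cyclotomic q ℤ) (p : ℤ), hexp,
            show q * 3 = n by omega]
          exact heq3
        have hq6 : 1 < q := by
          have h9a : 9 ≤ 3 ^ a := by
            calc 9 = 3 ^ 2 := by norm_num
              _ ≤ 3 ^ a := Nat.pow_le_pow_right (by norm_num) ha2
          have : 18 ≤ n := by rw [← hmn, hm2']; omega
          omega
        have hlt := Polynomial.sub_one_pow_totient_lt_natAbs_cyclotomic_eval
          (n := q) (q := 8) hq6 (by norm_num)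
        rw [heval] at hlt
        norm_num at hlt
        have h7 : 7 ≤ 7 ^ q.totient := by
          calc 7 = 7 ^ 1 := by norm_num
            _ ≤ 7 ^ q.totient := Nat.pow_le_pow_right (by norm_num)
                (Nat.totient_pos.mpr (by omega))
        omega
      have hn6 : n = 6 := by rw [← hmn, ha1, hm2']; norm_num
      exact ⟨hp2', by simp [hn6]⟩
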